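/- Let SF = (A,R) be a SETAF and E ⊆ A. Then for all C ⊆ A it holds that E ∈ adm(SF,C) if and only if for every S ∈ SCCs(SF), (E ∩ S) ∈ adm(SF↓_{UP_SF(S,E)}^{(E∖S)⁺_R}, U_SF(S,E) ∩ C, M_SF(S,E)). -/

import Mathlib

/-- A SETAF: a finite set of arguments `A` together with an attack relation `R`
    whose elements are pairs `(T, h)` with nonempty tail `T ⊆ A` and head `h ∈ A`. -/
structure SETAF (α : Type*) where
  A : Set α
  R : Set (Set α × α)
  finA : A.Finite
  tail_nonempty : ∀ r ∈ R, (r.1 : Set α).Nonempty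
  tail_subset : ∀ r ∈ R, r.1 ⊆ A
  head_mem : ∀ r ∈ R, r.2 ∈ A

namespace SETAF

variable {α : Type*}

/-- `S ↦_R a` : the set `S` attacks the argument `a`. -/
def attacksArg (SF : SETAF α) (S : Set α) (a : α) : Prop :=
  ∃ T, T ⊆ S ∧ (T, a) ∈ SF.R

/-- `S ↦_R S'` : the set `S` attacks the set `S'`. -/
def attacksSet (SF : SETAF α) (S S' : Set α) : Prop :=
  ∃ a ∈ S', SF.attacksArg S a

/-- `S⁺_R`. -/
def plus (SF : SETAF α) (S : Set α) : Set α := {a | SF.attacksArg S a}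

/-- The range `S⊕_R = S ∪ S⁺_R`. -/
def range (SF : SETAF α) (S : Set α) : Set α := S ∪ SF.plus S

/-- Conflict-free sets. -/
def cf (SF : SETAF α) : Set (Set α) :=
  {S | S ⊆ SF.A ∧ ∀ r ∈ SF.R, ¬ (r.1 ∪ {r.2} ⊆ S)}

/-- `S` defends `a` : every attacker-set of `a` is counter-attacked by `S`. -/
def defends (SF : SETAF α) (S : Set α) (a : α) : Prop :=
  ∀ B ⊆ SF.A, SF.attacksArg B a → SF.attacksSet S B

/-- Admissible sets. -/
def adm (SF : SETAF α) : Set (Set α) :=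
  {S | S ∈ SF.cf ∧ ∀ a ∈ S, SF.defends S a}

/-- Complete extensions. -/
def com (SF : SETAF α) : Set (Set α) :=
  {S | S ∈ SF.adm ∧ ∀ a ∈ SF.A, SF.defends S a → a ∈ S}

/-- Stable extensions. -/
def stb (SF : SETAF α) : Set (Set α) :=
  {S | S ∈ SF.cf ∧ ∀ a ∈ SF.A \ S, SF.attacksArg S a}

/-- Preferred extensions. -/
def pref (SF : SETAF α) : Set (Set α) :=
  {S | S ∈ SF.adm ∧ ¬ ∃ T ∈ SF.adm, S ⊂ T}

/-- Semi-stable extensions. -/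
def sem (SF : SETAF α) : Set (Set α) :=
  {S | S ∈ SF.adm ∧ ¬ ∃ T ∈ SF.adm, SF.range S ⊂ SF.range T}

/-- The `E`-reduct `SF^E` of a SETAF. -/
def reduct (SF : SETAF α) (E : Set α) : SETAF α where
  A := SF.A \ SF.range E
  R := {r | ∃ T h, (T, h) ∈ SF.R ∧ T ∩ SF.plus E = ∅ ∧ ¬ T ⊆ E ∧
        h ∈ SF.A \ SF.range E ∧ r = (T \ E, h)}
  finA := SF.finA.subset Set.diff_subset
  tail_nonempty := by
    rintro r ⟨T, h, hR, hTE, hTsub, hh, rfl⟩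
    exact Set.diff_nonempty.mpr hTsub
  tail_subset := by
    rintro r ⟨T, h, hR, hTE, hTsub, hh, rfl⟩
    rintro t ⟨htT, htE⟩
    refine ⟨SF.tail_subset (T, h) hR htT, ?_⟩
    rintro (hE | hplus)
    · exact htE hE
    · exact (Set.ext_iff.mp hTE t).mp ⟨htT, hplus⟩
  head_mem := by
    rintro r ⟨T, h, hR, hTE, hTsub, hh, rfl⟩
    exact hh

/-- The restriction `SF↓_S^D` of a SETAF w.r.t. a set `S` and a set `D` of
    deleted (defeated) arguments. -/
def restrict (SF : SETAF α) (D S : Set α) : SETAF α where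
  A := (SF.A ∩ S) \ D
  R := {r | ∃ T h, (T, h) ∈ SF.R ∧ h ∈ (SF.A ∩ S) \ D ∧ T ∩ D = ∅ ∧
        (T ∩ ((SF.A ∩ S) \ D)).Nonempty ∧ r = (T ∩ ((SF.A ∩ S) \ D), h)}
  finA := SF.finA.subset (fun a ha => ha.1.1)
  tail_nonempty := by
    rintro r ⟨T, h, _, _, _, hne, rfl⟩
    exact hne
  tail_subset := by
    rintro r ⟨T, h, _, _, _, _, rfl⟩
    exact Set.inter_subset_right
  head_mem := by
    rintro r ⟨T, h, _, hh, _, _, rfl⟩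
    exact hh

/-- Edge of the primal graph of a SETAF. -/
def primalEdge (SF : SETAF α) (t h : α) : Prop := ∃ T, (T, h) ∈ SF.R ∧ t ∈ T

/-- `a` influences `b` : there is a directed path from `a` to `b` in the primal graph. -/
def influences (SF : SETAF α) : α → α → Prop := Relation.ReflTransGen SF.primalEdge

/-- The strongly connected component of an argument in the primal graph. -/
def scc (SF : SETAF α) (a : α) : Set α :=
  {b | SF.influences a b ∧ SF.influences b a}

/-- The strongly connected components of (the primal graph of) a SETAF. -/
def SCCs (SF : SETAF α) : Set (Set α) :=
  {S | ∃ a ∈ SF.A, S = SF.scc a}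

/-- Defeated arguments of an SCC `S` w.r.t. `E`. -/
def Dscc (SF : SETAF α) (S E : Set α) : Set α :=
  {a ∈ S | SF.attacksArg (E \ S) a}

/-- Provisionally defeated arguments of an SCC `S` w.r.t. `E`. -/
def Pscc (SF : SETAF α) (S E : Set α) : Set α :=
  {a ∈ S | SF.attacksArg (SF.A \ (S ∪ SF.plus E)) a} \ SF.Dscc S E

/-- Undefeated arguments of an SCC `S` w.r.t. `E`. -/
def Uscc (SF : SETAF α) (S E : Set α) : Set α :=
  S \ (SF.Dscc S E ∪ SF.Pscc S E)

/-- `UP_SF(S,E) = U_SF(S,E) ∪ P_SF(S,E)`. -/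
def UPscc (SF : SETAF α) (S E : Set α) : Set α :=
  SF.Uscc S E ∪ SF.Pscc S E

/-- The mitigated attacks `M_SF(S,E)`. -/
def Mscc (SF : SETAF α) (S E : Set α) : Set (Set α × α) :=
  {r ∈ (SF.restrict (SF.plus (E \ S)) (SF.UPscc S E)).R |
    ∀ T', (T', r.2) ∈ SF.R → r.1 ⊆ T' → ¬ T' \ r.1 ⊆ E}

/-- `a` is acceptable considering `M` w.r.t. `E` (in the given SETAF). -/
def acceptableM (SF : SETAF α) (M : Set (Set α × α)) (E : Set α) (a : α) : Prop :=
  ∀ T, (T, a) ∈ SF.R → ∃ X t, (X, t) ∈ SF.R ∧ (X, t) ∉ M ∧ X ⊆ E ∧ t ∈ T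

/-- `adm(SF, C, M)` : admissible in `C` considering `M`. -/
def admCM (SF : SETAF α) (C : Set α) (M : Set (Set α × α)) : Set (Set α) :=
  {E | E ⊆ C ∧ E ∈ SF.cf ∧ ∀ a ∈ E, SF.acceptableM M E a}

/-- `com(SF, C, M)` : complete in `C` considering `M`. -/
def comCM (SF : SETAF α) (C : Set α) (M : Set (Set α × α)) : Set (Set α) :=
  {E | E ∈ SF.admCM C M ∧ ∀ a ∈ C, SF.acceptableM M E a → a ∈ E}

/-- `pref(SF, C, M)` : preferred in `C` considering `M`. -/
def prefCM (SF : SETAF α) (C : Set α) (M : Set (Set α × α)) : Set (Set α) :=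
  {E | E ∈ SF.admCM C M ∧ ¬ ∃ E' ∈ SF.admCM C M, E ⊂ E'}

/-- The characteristic function `F^M_{SF,C}` of `SF` in `C` considering `M`. -/
def charF (SF : SETAF α) (C : Set α) (M : Set (Set α × α)) (E : Set α) : Set α :=
  {a ∈ C | SF.acceptableM M E a}

/-- The empty SETAF `(∅, ∅)`. -/
def emptySETAF (α : Type*) : SETAF α where
  A := ∅
  R := ∅
  finA := Set.finite_empty
  tail_nonempty := by simp
  tail_subset := by simp
  head_mem := by simp

end SETAF

namespace SETAF

variable {α : Type*} {SF : SETAF α}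

lemma mem_scc_self (SF : SETAF α) (a : α) : a ∈ SF.scc a :=
  ⟨Relation.ReflTransGen.refl, Relation.ReflTransGen.refl⟩

lemma scc_eq_of_mem {a b : α} (h : b ∈ SF.scc a) : SF.scc b = SF.scc a := by
  ext c
  exact ⟨fun hc => ⟨Relation.ReflTransGen.trans h.1 hc.1, Relation.ReflTransGen.trans hc.2 h.2⟩,
    fun hc => ⟨Relation.ReflTransGen.trans h.2 hc.1, Relation.ReflTransGen.trans hc.2 h.1⟩⟩

lemma scc_sandwich {a s x h' : α} (hs : s ∈ SF.scc a) (hh : h' ∈ SF.scc a)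
    (e1 : SF.primalEdge s x) (e2 : SF.primalEdge x h') : x ∈ SF.scc a :=
  ⟨Relation.ReflTransGen.trans hs.1 (Relation.ReflTransGen.single e1),
    Relation.ReflTransGen.trans (Relation.ReflTransGen.single e2) hh.2⟩

lemma UPscc_eq (SF : SETAF α) (S E : Set α) : SF.UPscc S E = S \ SF.Dscc S E := by
  ext x
  simp only [UPscc, Uscc, Pscc, Set.mem_union, Set.mem_diff, Set.mem_sep_iff]
  tauto

lemma Dscc_subset_plus {S E : Set α} : SF.Dscc S E ⊆ SF.plus (E \ S) := fun _ hx => hx.2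

lemma UPscc_subset {S E : Set α} : SF.UPscc S E ⊆ S := by
  rw [UPscc_eq]; exact Set.diff_subset

lemma not_attacked_of_cf {E : Set α} (hcf : E ∈ SF.cf) {e : α} (he : e ∈ E)
    {E' : Set α} (hE' : E' ⊆ E) : ¬ SF.attacksArg E' e := by
  rintro ⟨X, hXs, hXR⟩
  exact hcf.2 (X, e) hXR (Set.union_subset (hXs.trans hE') (by simpa using he))

lemma x_in_A' (SF : SETAF α) {E : Set α} {a h x : α} {T X : Set α}
    (hh : h ∈ SF.scc a) (hTR : (T, h) ∈ SF.R) (hxT : x ∈ T)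
    (hxD : x ∉ SF.plus (E \ SF.scc a)) (hXE : X ⊆ E) (hXR : (X, x) ∈ SF.R) :
    x ∈ (SF.A ∩ SF.UPscc (SF.scc a) E) \ SF.plus (E \ SF.scc a) := by
  have hxA : x ∈ SF.A := SF.tail_subset (T, h) hTR hxT
  have hxS : x ∈ SF.scc a := by
    by_contra hxS
    have hXS : X ∩ SF.scc a = ∅ := by
      by_contra hne
      obtain ⟨ξ, hξX, hξS⟩ := Set.nonempty_iff_ne_empty.mpr hne
      exact hxS (scc_sandwich hξS hh ⟨X, hXR, hξX⟩ ⟨T, hTR, hxT⟩)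
    exact hxD ⟨X, fun ξ hξ => ⟨hXE hξ,
      fun hS => (Set.eq_empty_iff_forall_notMem.mp hXS ξ) ⟨hξ, hS⟩⟩, hXR⟩
  have hxUP : x ∈ SF.UPscc (SF.scc a) E := by
    rw [UPscc_eq]
    exact ⟨hxS, fun hD => hxD (Dscc_subset_plus hD)⟩
  exact ⟨⟨hxA, hxUP⟩, hxD⟩

lemma exists_min_finite {β : Type*} {r : β → β → Prop}
    (htrans : ∀ {x y z : β}, r x y → r y z → r x z) (hirr : ∀ x, ¬ r x x)
    {s : Set β} (hfin : s.Finite) : s.Nonempty → ∃ m ∈ s, ∀ x ∈ s, ¬ r x m := by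
  refine Set.Finite.induction_on (motive := fun s _ => s.Nonempty → ∃ m ∈ s, ∀ x ∈ s, ¬ r x m) s hfin
    (by rintro ⟨x, hx⟩; exact absurd hx (Set.notMem_empty x)) ?_
  · intro a t hat htfin ih _
    rcases t.eq_empty_or_nonempty with rfl | htne
    · refine ⟨a, Set.mem_insert _ _, ?_⟩
      intro x hx hr
      rw [Set.mem_insert_iff] at hx
      rcases hx with rfl | hx
      · exact hirr x hr
      · exact absurd hx (Set.notMem_empty x)
    · obtain ⟨m, hm, hmin⟩ := ih htne
      by_cases ham : r a m
      · refine ⟨a, Set.mem_insert _ _, ?_⟩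
        intro x hx hr
        rw [Set.mem_insert_iff] at hx
        rcases hx with rfl | hx
        · exact hirr x hr
        · exact hmin x hx (htrans hr ham)
      · refine ⟨m, Set.mem_insert_of_mem _ hm, ?_⟩
        intro x hx hr
        rw [Set.mem_insert_iff] at hx
        rcases hx with rfl | hx
        · exact ham hr
        · exact hmin x hx hr

end SETAF

open SETAF

/-- Proposition 3: for all `C ⊆ A`, `E ∈ adm(SF,C)` iff for every SCC `S`,
    `E ∩ S ∈ adm(SF↓_{UP_SF(S,E)}^{(E∖S)⁺}, U_SF(S,E) ∩ C, M_SF(S,E))`. -/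
theorem stmt18 {α : Type*} (SF : SETAF α) (E : Set α) (hE : E ⊆ SF.A) :
    ∀ C ⊆ SF.A,
      (E ∈ SF.admCM C ∅ ↔
        ∀ S ∈ SF.SCCs,
          E ∩ S ∈ (SF.restrict (SF.plus (E \ S)) (SF.UPscc S E)).admCM
            (SF.Uscc S E ∩ C) (SF.Mscc S E)) := by
  intro C hC
  constructor
  · -- Forward direction
    rintro ⟨hEC, ⟨hEA, hEcfR⟩, hEacc⟩ S ⟨a, haA, rfl⟩
    have hkey1 : ∀ e ∈ E, e ∉ SF.plus (E \ SF.scc a) := fun e he hp =>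
      not_attacked_of_cf ⟨hEA, hEcfR⟩ he Set.diff_subset hp
    have hkeyU : ∀ e ∈ E ∩ SF.scc a, e ∈ SF.Uscc (SF.scc a) E := by
      rintro e ⟨heE, heS⟩
      refine ⟨heS, ?_⟩
      rintro (hD | hP)
      · exact hkey1 e heE (Dscc_subset_plus hD)
      · obtain ⟨⟨heS', W, hWsub, hWR⟩, hnD⟩ := hP
        obtain ⟨X, w, hXwR, _, hXE, hwW⟩ := hEacc e heE W hWR
        exact (hWsub hwW).2 (Set.mem_union_right _ ⟨X, hXE, hXwR⟩)
    have hsubA' : E ∩ SF.scc a ⊆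
        (SF.A ∩ SF.UPscc (SF.scc a) E) \ SF.plus (E \ SF.scc a) := by
      rintro e ⟨heE, heS⟩
      exact ⟨⟨hE heE, Or.inl (hkeyU e ⟨heE, heS⟩)⟩, hkey1 e heE⟩
    refine ⟨fun e he => ⟨hkeyU e he, hEC he.1⟩, ⟨hsubA', ?_⟩, ?_⟩
    · -- conflict-freeness in the restricted SETAF
      rintro r ⟨T, h, hTR, hhA', hTD, hTne, rfl⟩ hcontra
      have hhES : h ∈ E ∩ SF.scc a := hcontra (Set.mem_union_right _ rfl)
      obtain ⟨X, x, hXR, -, hXE, hxT⟩ := hEacc h hhES.1 T hTR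
      have hxD : x ∉ SF.plus (E \ SF.scc a) := fun hp =>
        (Set.eq_empty_iff_forall_notMem.mp hTD x) ⟨hxT, hp⟩
      have hxA' := x_in_A' SF hhES.2 hTR hxT hxD hXE hXR
      have hxE : x ∈ E := (hcontra (Set.mem_union_left _ ⟨hxT, hxA'⟩)).1
      exact hEcfR (X, x) hXR (Set.union_subset hXE (by simpa using hxE))
    · -- acceptability in the restricted SETAF
      rintro e ⟨heE, heS⟩ T' hT'
      obtain ⟨T, h, hTR, hhA', hTD, hTne, heq⟩ := hT'
      injection heq with heq1 heq2
      subst heq1; subst heq2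
      obtain ⟨X, x, hXR, -, hXE, hxT⟩ := hEacc e heE T hTR
      have hxD : x ∉ SF.plus (E \ SF.scc a) := fun hp =>
        (Set.eq_empty_iff_forall_notMem.mp hTD x) ⟨hxT, hp⟩
      have hxA' := x_in_A' SF heS hTR hxT hxD hXE hXR
      have hXD : X ∩ SF.plus (E \ SF.scc a) = ∅ := by
        rw [Set.eq_empty_iff_forall_notMem]
        rintro ξ ⟨hξX, hξp⟩
        exact hkey1 ξ (hXE hξX) hξp
      have hXne : (X ∩ ((SF.A ∩ SF.UPscc (SF.scc a) E) \ SF.plus (E \ SF.scc a))).Nonempty := by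
        have hXSne : (X ∩ SF.scc a).Nonempty := by
          by_contra hc
          rw [Set.not_nonempty_iff_eq_empty] at hc
          exact hxA'.2 ⟨X, fun ξ hξ => ⟨hXE hξ,
            fun hS => (Set.eq_empty_iff_forall_notMem.mp hc ξ) ⟨hξ, hS⟩⟩, hXR⟩
        obtain ⟨ξ, hξX, hξS⟩ := hXSne
        exact ⟨ξ, hξX, hsubA' ⟨hXE hξX, hξS⟩⟩
      refine ⟨X ∩ ((SF.A ∩ SF.UPscc (SF.scc a) E) \ SF.plus (E \ SF.scc a)), x,
        ⟨X, x, hXR, hxA', hXD, hXne, rfl⟩, ?_, ?_, ⟨hxT, hxA'⟩⟩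
      · intro hM
        exact hM.2 X hXR Set.inter_subset_left (fun y hy => hXE hy.1)
      · exact fun ξ hξ => ⟨hXE hξ.1, UPscc_subset hξ.2.1.2⟩
  · -- Backward direction
    intro hRHS
    have key : ∀ e ∈ E,
        (e ∈ (SF.A ∩ SF.UPscc (SF.scc e) E) \ SF.plus (E \ SF.scc e)) ∧
          e ∈ SF.Uscc (SF.scc e) E ∩ C := by
      intro e he
      obtain ⟨hsub, ⟨hsubA', _⟩, _⟩ := hRHS (SF.scc e) ⟨e, hE he, rfl⟩
      exact ⟨hsubA' ⟨he, mem_scc_self SF e⟩, hsub ⟨he, mem_scc_self SF e⟩⟩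
    refine ⟨fun e he => ((key e he).2).2, ⟨hE, ?_⟩, ?_⟩
    · -- conflict-freeness of E
      rintro ⟨T, h⟩ hrR hrsub
      have hne : ({h' | ∃ T', (T', h') ∈ SF.R ∧ T' ∪ {h'} ⊆ E} : Set α).Nonempty :=
        ⟨h, T, hrR, hrsub⟩
      have hfin : ({h' | ∃ T', (T', h') ∈ SF.R ∧ T' ∪ {h'} ⊆ E} : Set α).Finite :=
        SF.finA.subset (by
          rintro h' ⟨T', _, hs⟩
          exact hE (hs (Set.mem_union_right _ rfl)))
      obtain ⟨m, hmH, hmin⟩ := exists_min_finite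
        (r := fun x y => SF.influences x y ∧ ¬ SF.influences y x)
        (fun hxy hyz => ⟨Relation.ReflTransGen.trans hxy.1 hyz.1,
          fun h => hyz.2 (Relation.ReflTransGen.trans h hxy.1)⟩)
        (fun x hx => hx.2 hx.1) hfin hne
      obtain ⟨Tm, hTmR, hTmE⟩ := hmH
      have hmE : m ∈ E := hTmE (Set.mem_union_right _ rfl)
      obtain ⟨hsub, ⟨hsubA', hcf'⟩, -⟩ := hRHS (SF.scc m) ⟨m, hE hmE, rfl⟩
      have hTD : Tm ∩ SF.plus (E \ SF.scc m) = ∅ := by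
        rw [Set.eq_empty_iff_forall_notMem]
        rintro t ⟨htT, htp⟩
        obtain ⟨X, hXsub, hXR⟩ := htp
        have htE : t ∈ E := hTmE (Set.mem_union_left _ htT)
        have htH : t ∈ {h' | ∃ T', (T', h') ∈ SF.R ∧ T' ∪ {h'} ⊆ E} :=
          ⟨X, hXR, Set.union_subset (hXsub.trans Set.diff_subset) (by simpa using htE)⟩
        have hinfl : SF.influences t m := Relation.ReflTransGen.single ⟨Tm, hTmR, htT⟩
        have h2 : SF.influences m t := by
          by_contra hc
          exact hmin t htH ⟨hinfl, hc⟩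
        have htS : t ∈ SF.scc m := ⟨h2, hinfl⟩
        have hk := (key t htE).1.2
        rw [scc_eq_of_mem htS] at hk
        exact hk ⟨X, hXsub, hXR⟩
      have hmA' := (key m hmE).1
      have hTne : (Tm ∩ ((SF.A ∩ SF.UPscc (SF.scc m) E) \ SF.plus (E \ SF.scc m))).Nonempty := by
        by_contra hc
        rw [Set.not_nonempty_iff_eq_empty] at hc
        apply hmA'.2
        refine ⟨Tm, ?_, hTmR⟩
        intro t htT
        have htE : t ∈ E := hTmE (Set.mem_union_left _ htT)
        refine ⟨htE, fun htS => ?_⟩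
        have h1 := (key t htE).1
        rw [scc_eq_of_mem htS] at h1
        exact (Set.eq_empty_iff_forall_notMem.mp hc t) ⟨htT, h1⟩
      refine hcf' (Tm ∩ ((SF.A ∩ SF.UPscc (SF.scc m) E) \ SF.plus (E \ SF.scc m)), m)
        ⟨Tm, m, hTmR, hmA', hTD, hTne, rfl⟩ (Set.union_subset ?_ (by simpa using (⟨hmE, UPscc_subset hmA'.1.2⟩ : m ∈ E ∩ SF.scc m)))
      · rintro t ⟨htT, htA'⟩
        exact ⟨hTmE (Set.mem_union_left _ htT), UPscc_subset htA'.1.2⟩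
    · -- every element of E is acceptable
      intro e he T hTR
      obtain ⟨hsub, ⟨hsubA', hcf'⟩, hacc'⟩ := hRHS (SF.scc e) ⟨e, hE he, rfl⟩
      by_cases hesc : ∃ t ∈ T, SF.attacksArg E t
      · obtain ⟨t, htT, X, hXE, hXR⟩ := hesc
        exact ⟨X, t, hXR, by simp, hXE, htT⟩
      · push_neg at hesc
        have heA' := (key e he).1
        have hTD : T ∩ SF.plus (E \ SF.scc e) = ∅ := by
          rw [Set.eq_empty_iff_forall_notMem]
          rintro t ⟨htT, X, hXs, hXR⟩
          exact hesc t htT ⟨X, hXs.trans Set.diff_subset, hXR⟩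
        have hTne : (T ∩ ((SF.A ∩ SF.UPscc (SF.scc e) E) \ SF.plus (E \ SF.scc e))).Nonempty := by
          by_contra hc
          rw [Set.not_nonempty_iff_eq_empty] at hc
          have hTsub : T ⊆ SF.A \ (SF.scc e ∪ SF.plus E) := by
            intro t htT
            refine ⟨SF.tail_subset _ hTR htT, ?_⟩
            rintro (htS | htp)
            · have htD' : t ∉ SF.plus (E \ SF.scc e) := fun hp =>
                (Set.eq_empty_iff_forall_notMem.mp hTD t) ⟨htT, hp⟩
              have htUP : t ∈ SF.UPscc (SF.scc e) E := by
                rw [UPscc_eq]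
                exact ⟨htS, fun hD => htD' (Dscc_subset_plus hD)⟩
              exact (Set.eq_empty_iff_forall_notMem.mp hc t)
                ⟨htT, ⟨SF.tail_subset _ hTR htT, htUP⟩, htD'⟩
            · exact hesc t htT htp
          have heP : e ∈ SF.Pscc (SF.scc e) E :=
            ⟨⟨mem_scc_self SF e, T, hTsub, hTR⟩, fun hD => heA'.2 (Dscc_subset_plus hD)⟩
          exact ((key e he).2.1).2 (Or.inr heP)
        obtain ⟨X, x, hXR', hXM, hXE, hxT⟩ := hacc' e ⟨he, mem_scc_self SF e⟩
          (T ∩ ((SF.A ∩ SF.UPscc (SF.scc e) E) \ SF.plus (E \ SF.scc e)))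
          ⟨T, e, hTR, heA', hTD, hTne, rfl⟩
        have hex : ∃ T', (T', x) ∈ SF.R ∧ X ⊆ T' ∧ T' \ X ⊆ E := by
          by_contra hcon
          push_neg at hcon
          exact hXM ⟨hXR', fun T' h1 h2 => hcon T' h1 h2⟩
        obtain ⟨T', hT'R, hXT', hT'E⟩ := hex
        have hT'subE : T' ⊆ E := by
          intro y hy
          by_cases hyX : y ∈ X
          · exact (hXE hyX).1
          · exact hT'E ⟨hy, hyX⟩
        exact ⟨T', x, hT'R, by simp, hT'subE, hxT.1⟩
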